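/- arXiv:1709.07031 — 2 statements merged into one kernel-verified Lean document; each statement's English description precedes it below -/
import Mathlib

section
/- Let (γ̂_{n,·})_{n∈ℕ} be random elements of C[0,1] on a probability space, let t ↦ γ_t be a continuous function on [0,1], let Γ be a random element of C[0,1], and let (λ_n) be a positive bounded sequence. Assume (i) sup_{t∈[0,1]} |λ_n^{−1}(γ̂_{n,t} − γ_t) − Γ_t| →(P) 0 as n → ∞, and (ii) sup_{|s−t|≤δ_n} |γ_s − γ_t| = o(λ_n). Then the linearly interpolated estimator γ̂*_{n,t} := ⟨γ̂_{n,·}⟩_{n,t} satisfies sup_{t∈[0,1]} |λ_n^{−1}(γ̂*_{n,t} − γ_t) − Γ_t| →(P) 0. -/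
open MeasureTheory Filter Topology Set
open scoped Classical

/-- Piecewise linear interpolation of `z` on the grid `t 1 < t 2 < … < t jn`. -/
noncomputable def linInterp (jn : ℕ) (t : ℕ → ℝ) (z : ℝ → ℝ) (x : ℝ) : ℝ :=
  if x ≤ t 1 then z (t 1)
  else if h : ∃ j, 2 ≤ j ∧ j ≤ jn ∧ t (j - 1) < x ∧ x ≤ t j then
    ((t (Nat.find h) - x) * z (t (Nat.find h - 1))
        + (x - t (Nat.find h - 1)) * z (t (Nat.find h)))
      / (t (Nat.find h) - t (Nat.find h - 1))
  else z (t jn)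

lemma chain_mono (jn : ℕ) (t : ℕ → ℝ)
    (hmono : ∀ j, 1 ≤ j → j < jn → t j < t (j + 1)) :
    ∀ i j, 1 ≤ i → i ≤ j → j ≤ jn → t i ≤ t j := by
  intro i j hi hij hj
  induction j with
  | zero => omega
  | succ m ih =>
    rcases Nat.eq_or_lt_of_le hij with h | hlt
    · exact h ▸ le_rfl
    · have h2 : t i ≤ t m := ih (by omega) (by omega)
      have h3 : t m < t (m + 1) := hmono m (by omega) (by omega)
      linarith

lemma discrete_ivt (jn : ℕ) (t : ℕ → ℝ) (x : ℝ) :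
    ∀ m, 1 ≤ m → m ≤ jn → t 1 < x → x ≤ t m →
      ∃ j, 2 ≤ j ∧ j ≤ jn ∧ t (j - 1) < x ∧ x ≤ t j := by
  intro m
  induction m with
  | zero => omega
  | succ m ih =>
    intro _ hle h1 hx
    rcases Nat.eq_zero_or_pos m with rfl | hm
    · exact absurd hx (not_le.2 h1)
    · by_cases hxm : x ≤ t m
      · exact ih hm (by omega) h1 hxm
      · exact ⟨m + 1, by omega, hle, by simpa using not_le.1 hxm, hx⟩

lemma linInterp_convex (jn : ℕ) (t : ℕ → ℝ) (D : ℝ)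
    (hjn : 1 ≤ jn) (ht0 : t 0 = 0) (htend : t (jn + 1) = 1)
    (h0 : 0 ≤ t 1) (h1 : t jn ≤ 1)
    (hmono : ∀ j, 1 ≤ j → j < jn → t j < t (j + 1))
    (hD : ∀ j, 1 ≤ j → j ≤ jn + 1 → t j - t (j - 1) ≤ D)
    (x : ℝ) (hx : x ∈ Icc (0:ℝ) 1) :
    ∃ u v α β, u ∈ Icc (0:ℝ) 1 ∧ v ∈ Icc (0:ℝ) 1 ∧ |u - x| ≤ D ∧ |v - x| ≤ D ∧
      0 ≤ α ∧ 0 ≤ β ∧ α + β = 1 ∧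
      ∀ z : ℝ → ℝ, linInterp jn t z x = α * z u + β * z v := by
  have hchain := chain_mono jn t hmono
  have ht1jn : t 1 ≤ t jn := hchain 1 jn le_rfl hjn le_rfl
  by_cases hA : x ≤ t 1
  · refine ⟨t 1, t 1, 1, 0, ⟨h0, le_trans ht1jn h1⟩, ⟨h0, le_trans ht1jn h1⟩, ?_, ?_, by norm_num, by norm_num, by norm_num, ?_⟩
    · rw [abs_of_nonneg (by linarith [hx.1])]
      have := hD 1 le_rfl (by omega)
      simp only [ht0] at this
      linarith [hx.1]
    · rw [abs_of_nonneg (by linarith [hx.1])]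
      have := hD 1 le_rfl (by omega)
      simp only [ht0] at this
      linarith [hx.1]
    · intro z; simp [linInterp, hA]
  · by_cases h : ∃ j, 2 ≤ j ∧ j ≤ jn ∧ t (j - 1) < x ∧ x ≤ t j
    · set j := Nat.find h with hj
      obtain ⟨hj2, hjle, hjlt, hjx⟩ := Nat.find_spec h
      have hden : 0 < t j - t (j - 1) := by linarith
      have hu01 : t (j-1) ∈ Icc (0:ℝ) 1 :=
        ⟨le_trans h0 (hchain 1 (j-1) le_rfl (by omega) (by omega)),
         le_trans (hchain (j-1) jn (by omega) (by omega) le_rfl) h1⟩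
      have hv01 : t j ∈ Icc (0:ℝ) 1 :=
        ⟨le_trans h0 (hchain 1 j le_rfl (by omega) (by omega)),
         le_trans (hchain j jn (by omega) hjle le_rfl) h1⟩
      have hgap : t j - t (j - 1) ≤ D := hD j (by omega) (by omega)
      refine ⟨t (j-1), t j, (t j - x)/(t j - t (j-1)), (x - t (j-1))/(t j - t (j-1)),
        hu01, hv01, ?_, ?_, div_nonneg (by linarith) hden.le, div_nonneg (by linarith) hden.le, ?_, ?_⟩
      · rw [abs_of_nonpos (by linarith)]; linarith
      · rw [abs_of_nonneg (by linarith)]; linarith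
      · field_simp; ring
      · intro z
        simp only [linInterp, if_neg hA, dif_pos h]
        rw [← hj]
        field_simp
    · have hlt : t jn < x := by
        by_contra hle
        exact h (discrete_ivt jn t x jn hjn le_rfl (not_le.1 hA) (not_lt.1 hle))
      have hjn01 : t jn ∈ Icc (0:ℝ) 1 := ⟨le_trans h0 ht1jn, h1⟩
      refine ⟨t jn, t jn, 1, 0, hjn01, hjn01, ?_, ?_, by norm_num, by norm_num, by norm_num, ?_⟩
      · rw [abs_of_nonpos (by linarith)]
        have := hD (jn+1) (by omega) le_rfl
        simp only [htend, Nat.add_sub_cancel] at this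
        linarith [hx.2]
      · rw [abs_of_nonpos (by linarith)]
        have := hD (jn+1) (by omega) le_rfl
        simp only [htend, Nat.add_sub_cancel] at this
        linarith [hx.2]
      · intro z; simp [linInterp, hA, h]

lemma key_bound (lam a b c : ℝ) (hlam : 0 < lam) (z γf Γω : ℝ → ℝ) (s u v α β : ℝ)
    (hα : 0 ≤ α) (hβ : 0 ≤ β) (hαβ : α + β = 1)
    (Hu : |(z u - γf u)/lam - Γω u| ≤ a) (Hv : |(z v - γf v)/lam - Γω v| ≤ a)
    (Hγu : |γf u - γf s| ≤ b * lam) (Hγv : |γf v - γf s| ≤ b * lam)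
    (HΓu : |Γω u - Γω s| ≤ c) (HΓv : |Γω v - Γω s| ≤ c) :
    |(α * z u + β * z v - γf s)/lam - Γω s| ≤ a + b + c := by
  have hne : lam ≠ 0 := ne_of_gt hlam
  have point : ∀ w : ℝ, |(z w - γf w)/lam - Γω w| ≤ a → |γf w - γf s| ≤ b * lam →
      |Γω w - Γω s| ≤ c → |(z w - γf s)/lam - Γω s| ≤ a + b + c := by
    intro w h1 h2 h3
    have hdecomp : (z w - γf s)/lam - Γω s
        = ((z w - γf w)/lam - Γω w) + (γf w - γf s)/lam + (Γω w - Γω s) := by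
      field_simp
      ring
    rw [hdecomp]
    have hmid : |(γf w - γf s)/lam| ≤ b := by
      rw [abs_div, abs_of_pos hlam, div_le_iff₀ hlam]
      exact h2
    calc |((z w - γf w)/lam - Γω w) + (γf w - γf s)/lam + (Γω w - Γω s)|
        ≤ |((z w - γf w)/lam - Γω w) + (γf w - γf s)/lam| + |Γω w - Γω s| := abs_add_le _ _
      _ ≤ |(z w - γf w)/lam - Γω w| + |(γf w - γf s)/lam| + |Γω w - Γω s| := by
          linarith [abs_add_le ((z w - γf w)/lam - Γω w) ((γf w - γf s)/lam)]
      _ ≤ a + b + c := by linarith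
  have hu' := point u Hu Hγu HΓu
  have hv' := point v Hv Hγv HΓv
  have hdecomp : (α * z u + β * z v - γf s)/lam - Γω s
      = α * ((z u - γf s)/lam - Γω s) + β * ((z v - γf s)/lam - Γω s) := by
    field_simp
    linear_combination (γf s + lam * Γω s) * hαβ
  rw [hdecomp]
  calc |α * ((z u - γf s)/lam - Γω s) + β * ((z v - γf s)/lam - Γω s)|
      ≤ |α * ((z u - γf s)/lam - Γω s)| + |β * ((z v - γf s)/lam - Γω s)| := abs_add_le _ _
    _ = α * |(z u - γf s)/lam - Γω s| + β * |(z v - γf s)/lam - Γω s| := by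
        rw [abs_mul, abs_mul, abs_of_nonneg hα, abs_of_nonneg hβ]
    _ ≤ α * (a + b + c) + β * (a + b + c) := by
        have h0 : 0 ≤ a + b + c := le_trans (abs_nonneg _) hu'
        exact add_le_add (mul_le_mul_of_nonneg_left hu' hα) (mul_le_mul_of_nonneg_left hv' hβ)
    _ = a + b + c := by rw [← add_mul, hαβ, one_mul]

lemma rat_pair (Γω : ℝ → ℝ) (hΓ : ContinuousOn Γω (Icc 0 1)) (d c : ℝ)
    {s u : ℝ} (hs : s ∈ Icc (0:ℝ) 1) (hu : u ∈ Icc (0:ℝ) 1)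
    (hd : |s - u| ≤ d) (hc : c < |Γω s - Γω u|) :
    ∃ q r : ℚ, (q:ℝ) ∈ Icc (0:ℝ) 1 ∧ (r:ℝ) ∈ Icc (0:ℝ) 1 ∧
      |(q:ℝ) - (r:ℝ)| ≤ d ∧ c < |Γω q - Γω r| := by
  have hd0 : 0 ≤ d := le_trans (abs_nonneg _) hd
  -- wlog s ≤ u
  wlog hsu : s ≤ u generalizing s u
  · obtain ⟨q, r, hq, hr, hqr, hval⟩ := this hu hs (by rwa [abs_sub_comm]) (by rwa [abs_sub_comm]) (le_of_not_ge hsu)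
    exact ⟨r, q, hr, hq, by rwa [abs_sub_comm], by rwa [abs_sub_comm]⟩
  rcases eq_or_lt_of_le hsu with rfl | hlt
  · refine ⟨0, 0, by norm_num, by norm_num, by simpa using hd0, ?_⟩
    simpa using lt_of_lt_of_le hc (by simp)
  · set L := |Γω s - Γω u| with hL
    have hdpos : 0 < L - c := by linarith
    obtain ⟨θ1, hθ1, hball1⟩ := Metric.continuousWithinAt_iff.1 (hΓ s hs) ((L - c)/2) (by linarith)
    obtain ⟨θ2, hθ2, hball2⟩ := Metric.continuousWithinAt_iff.1 (hΓ u hu) ((L - c)/2) (by linarith)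
    obtain ⟨q, hq1, hq2⟩ := exists_rat_btwn (lt_min hlt (by linarith : s < s + θ1))
    obtain ⟨r, hr1, hr2⟩ := exists_rat_btwn (max_lt hlt (by linarith : u - θ2 < u))
    have hqmem : (q:ℝ) ∈ Icc (0:ℝ) 1 :=
      ⟨le_trans hs.1 hq1.le, le_trans (le_trans hq2.le (min_le_left _ _)) hu.2⟩
    have hrmem : (r:ℝ) ∈ Icc (0:ℝ) 1 := ⟨le_trans hs.1 (le_trans (le_max_left _ _) hr1.le), le_trans hr2.le hu.2⟩
    have hqs : |Γω q - Γω s| < (L - c)/2 := by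
      have := hball1 hqmem (by
        rw [Real.dist_eq, abs_of_pos (by linarith : (0:ℝ) < (q:ℝ) - s)]
        have := lt_of_lt_of_le hq2 (min_le_right _ _); linarith)
      rwa [Real.dist_eq] at this
    have hru : |Γω r - Γω u| < (L - c)/2 := by
      have := hball2 hrmem (by
        rw [Real.dist_eq, abs_of_neg (by linarith : (r:ℝ) - u < 0)]
        have := lt_of_le_of_lt (le_max_right s (u - θ2)) hr1; linarith)
      rwa [Real.dist_eq] at this
    refine ⟨q, r, hqmem, hrmem, ?_, ?_⟩
    · have h1 : s ≤ (q:ℝ) := hq1.le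
      have h2 : (q:ℝ) ≤ u := le_trans hq2.le (min_le_left _ _)
      have h3 : s ≤ (r:ℝ) := le_trans (le_max_left _ _) hr1.le
      have h4 : (r:ℝ) ≤ u := hr2.le
      have : u - s ≤ d := by rw [abs_sub_comm, abs_of_nonneg (by linarith)] at hd; exact hd
      rw [abs_le]; constructor <;> linarith
    · have triag : L ≤ |Γω q - Γω r| + |Γω q - Γω s| + |Γω r - Γω u| := by
        have : Γω s - Γω u = -(Γω q - Γω s) + (Γω q - Γω r) + (Γω r - Γω u) := by ring
        rw [hL, this]
        calc |(-(Γω q - Γω s)) + (Γω q - Γω r) + (Γω r - Γω u)|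
            ≤ |(-(Γω q - Γω s)) + (Γω q - Γω r)| + |Γω r - Γω u| := abs_add_le _ _
          _ ≤ |(-(Γω q - Γω s))| + |Γω q - Γω r| + |Γω r - Γω u| := by
              linarith [abs_add_le (-(Γω q - Γω s)) (Γω q - Γω r)]
          _ = |Γω q - Γω r| + |Γω q - Γω s| + |Γω r - Γω u| := by rw [abs_neg]; ring
      linarith

/-- the linearly interpolated estimator of the extreme value index
inherits the uniform asymptotic behavior of the original estimator. -/
theorem interpolated_gamma_estimator
    {Ω : Type*} [MeasurableSpace Ω] (P : Measure Ω) [IsProbabilityMeasure P]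
    (jn : ℕ → ℕ) (t : ℕ → ℕ → ℝ) (δ : ℕ → ℝ)
    (hjn : ∀ n, 1 ≤ jn n)
    (ht0 : ∀ n, t n 0 = 0) (htend : ∀ n, t n (jn n + 1) = 1)
    (htnonneg : ∀ n, 0 ≤ t n 1) (htle1 : ∀ n, t n (jn n) ≤ 1)
    (htmono : ∀ n j, 1 ≤ j → j < jn n → t n j < t n (j + 1))
    (hδ : ∀ n, δ n = (Finset.Icc 1 (jn n + 1)).sup' ⟨1, Finset.mem_Icc.mpr (by omega)⟩
      (fun j => t n j - t n (j - 1)))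
    (hδ0 : Tendsto δ atTop (𝓝 0))
    (γhat : ℕ → Ω → ℝ → ℝ) (γ : ℝ → ℝ) (Γ : Ω → ℝ → ℝ) (lam : ℕ → ℝ)
    (hmeas : ∀ n s, Measurable fun ω => γhat n ω s)
    (hpaths : ∀ n ω, ContinuousOn (γhat n ω) (Icc 0 1))
    (hγ : ContinuousOn γ (Icc 0 1))
    (hΓ : ∀ ω, ContinuousOn (Γ ω) (Icc 0 1))
    (hlam_pos : ∀ n, 0 < lam n) (hlam_bdd : ∃ C, ∀ n, lam n ≤ C)
    -- condition (E(λₙ)): uniform convergence in probability of the standardized errors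
    (hE : ∀ ε > 0, Tendsto
      (fun n => P {ω | ∃ s ∈ Icc (0:ℝ) 1, ε < |(γhat n ω s - γ s) / lam n - Γ ω s|})
      atTop (𝓝 0))
    -- smoothness: sup_{|s-u|≤δₙ} |γ s - γ u| = o(λₙ)
    (hsmooth : ∀ ε > 0, ∀ᶠ n in atTop, ∀ s ∈ Icc (0:ℝ) 1, ∀ u ∈ Icc (0:ℝ) 1,
      |s - u| ≤ δ n → |γ s - γ u| ≤ ε * lam n) :
    ∀ ε > 0, Tendsto
      (fun n => P {ω | ∃ s ∈ Icc (0:ℝ) 1,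
        ε < |(linInterp (jn n) (t n) (γhat n ω) s - γ s) / lam n - Γ ω s|})
      atTop (𝓝 0) := by
  
  intro ε hε
  have hε3 : (0:ℝ) < ε/3 := by linarith
  -- Step 1: choose a subsequence along which the sup-error is summably small
  have hsub : ∀ k : ℕ, ∃ n, P {ω | ∃ s ∈ Icc (0:ℝ) 1,
      (1:ℝ)/(k+1) < |(γhat n ω s - γ s) / lam n - Γ ω s|} ≤ (1/2 : ENNReal)^k := by
    intro k
    have h1 : (0:ℝ) < 1/(k+1) := by positivity
    have h2 : (0:ENNReal) < (1/2)^k := ENNReal.pow_pos (by norm_num) k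
    exact ((ENNReal.tendsto_nhds_zero.1 (hE _ h1)) _ h2).exists
  choose m hm using hsub
  set A : ℕ → Set Ω := fun k => {ω | ∃ s ∈ Icc (0:ℝ) 1,
    (1:ℝ)/(k+1) < |(γhat (m k) ω s - γ s) / lam (m k) - Γ ω s|} with hA
  set N : Set Ω := ⋂ j, ⋃ k, A (k + j) with hNdef
  have hN : P N = 0 := by
    have hle : ∀ j, P N ≤ (1/2:ENNReal)^j * 2 := by
      intro j
      calc P N ≤ P (⋃ k, A (k + j)) := measure_mono (Set.iInter_subset _ j)
        _ ≤ ∑' k, P (A (k + j)) := measure_iUnion_le _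
        _ ≤ ∑' k : ℕ, (1/2:ENNReal)^(k+j) := ENNReal.tsum_le_tsum (fun k => hm (k+j))
        _ = (1/2:ENNReal)^j * 2 := by
            simp_rw [pow_add]
            rw [ENNReal.tsum_mul_right, ENNReal.tsum_geometric, mul_comm]
            congr 1
            norm_num [ENNReal.one_sub_inv_two]
    have hlim : Tendsto (fun j : ℕ => (1/2:ENNReal)^j * 2) atTop (𝓝 0) := by
      have h := ENNReal.Tendsto.mul_const
        (ENNReal.tendsto_pow_atTop_nhds_zero_of_lt_one (by norm_num : (1/2:ENNReal) < 1))
        (Or.inr (by norm_num : (2:ENNReal) ≠ ⊤))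
      simpa using h
    exact le_antisymm (ge_of_tendsto' hlim hle) zero_le
  -- Step 2: off N, the standardized errors converge pointwise
  have hconv : ∀ ω, ω ∉ N → ∀ s ∈ Icc (0:ℝ) 1,
      Tendsto (fun k => (γhat (m k) ω s - γ s) / lam (m k)) atTop (𝓝 (Γ ω s)) := by
    intro ω hω s hs
    rw [hNdef, Set.mem_iInter] at hω
    push_neg at hω
    obtain ⟨j, hj⟩ := hω
    rw [Set.mem_iUnion] at hj
    push_neg at hj
    have hbound : ∀ k, j ≤ k → |(γhat (m k) ω s - γ s) / lam (m k) - Γ ω s| ≤ 1/(k+1) := by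
      intro k hk
      have h := hj (k - j)
      rw [Nat.sub_add_cancel hk] at h
      simp only [hA, Set.mem_setOf_eq] at h
      push_neg at h
      exact h s hs
    rw [tendsto_iff_dist_tendsto_zero]
    refine squeeze_zero' (Filter.Eventually.of_forall fun k => dist_nonneg)
      (eventually_atTop.2 ⟨j, fun k hk => ?_⟩) tendsto_one_div_add_atTop_nhds_zero_nat
    rw [Real.dist_eq]
    exact hbound k hk
  -- Step 3: measurable events capturing the modulus of continuity of Γ
  set T : ℚ → ℚ → Set Ω := fun q r =>
    ⋃ j : ℕ, ⋃ i : ℕ, ⋂ k : ℕ, ⋂ (_ : i ≤ k),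
      {ω | ε/3 + 1/(j+1) < |(γhat (m k) ω q - γ q) / lam (m k)
        - (γhat (m k) ω r - γ r) / lam (m k)|} with hT
  have hTmeas : ∀ q r, MeasurableSet (T q r) := by
    intro q r
    refine MeasurableSet.iUnion fun j => MeasurableSet.iUnion fun i =>
      MeasurableSet.iInter fun k => MeasurableSet.iInter fun _ => ?_
    have h1 : Measurable fun ω => |(γhat (m k) ω q - γ q) / lam (m k)
        - (γhat (m k) ω r - γ r) / lam (m k)| :=
      ((((hmeas (m k) q).sub_const _).div_const _).sub
        (((hmeas (m k) r).sub_const _).div_const _)).abs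
    exact measurableSet_lt measurable_const h1
  have hTmem : ∀ ω, ω ∉ N → ∀ q r : ℚ, (q:ℝ) ∈ Icc (0:ℝ) 1 → (r:ℝ) ∈ Icc (0:ℝ) 1 →
      (ω ∈ T q r ↔ ε/3 < |Γ ω q - Γ ω r|) := by
    intro ω hω q r hq hr
    have hlim : Tendsto (fun k => |(γhat (m k) ω q - γ q) / lam (m k)
        - (γhat (m k) ω r - γ r) / lam (m k)|) atTop (𝓝 (|Γ ω q - Γ ω r|)) :=
      ((hconv ω hω q hq).sub (hconv ω hω r hr)).abs
    constructor
    · intro hmem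
      simp only [hT, Set.mem_iUnion, Set.mem_iInter, Set.mem_setOf_eq] at hmem
      obtain ⟨j, i, hij⟩ := hmem
      have h1 : ε/3 + 1/((j:ℝ)+1) ≤ |Γ ω q - Γ ω r| :=
        ge_of_tendsto hlim (eventually_atTop.2 ⟨i, fun k hk => (hij k hk).le⟩)
      have h2 : (0:ℝ) < 1/((j:ℝ)+1) := by positivity
      linarith
    · intro hlt
      obtain ⟨j, hjlt⟩ := exists_nat_one_div_lt
        (show (0:ℝ) < (|Γ ω q - Γ ω r| - ε/3)/2 by linarith)
      have h2 : ε/3 + 1/((j:ℝ)+1) < |Γ ω q - Γ ω r| := by linarith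
      obtain ⟨i, hi⟩ := eventually_atTop.1 (hlim.eventually (eventually_gt_nhds h2))
      simp only [hT, Set.mem_iUnion, Set.mem_iInter, Set.mem_setOf_eq]
      exact ⟨j, i, hi⟩
  set S : ℝ → Set Ω := fun d =>
    ⋃ q : ℚ, ⋃ r : ℚ, ⋃ (_ : (q:ℝ) ∈ Icc (0:ℝ) 1 ∧ (r:ℝ) ∈ Icc (0:ℝ) 1
      ∧ |(q:ℝ) - (r:ℝ)| ≤ d), T q r with hS
  have hSmeas : ∀ d, MeasurableSet (S d) :=
    fun d => MeasurableSet.iUnion fun q => MeasurableSet.iUnion fun r =>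
      MeasurableSet.iUnion fun _ => hTmeas q r
  have hSmono : ∀ ⦃d d' : ℝ⦄, d ≤ d' → S d ⊆ S d' := by
    intro d d' hdd
    simp only [hS]
    refine Set.iUnion_mono fun q => Set.iUnion_mono fun r => ?_
    exact Set.iUnion_subset fun h =>
      Set.subset_iUnion_of_subset ⟨h.1, h.2.1, h.2.2.trans hdd⟩ subset_rfl
  have hSkey : ∀ d ω, ω ∉ S d → ω ∉ N → ∀ s ∈ Icc (0:ℝ) 1, ∀ u ∈ Icc (0:ℝ) 1,
      |s - u| ≤ d → |Γ ω s - Γ ω u| ≤ ε/3 := by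
    intro d ω hωS hωN s hs u hu hdist
    by_contra hgt
    obtain ⟨q, r, hq, hr, hqr, hval⟩ :=
      rat_pair (Γ ω) (hΓ ω) d (ε/3) hs hu hdist (not_le.1 hgt)
    exact hωS (Set.mem_iUnion.2 ⟨q, Set.mem_iUnion.2 ⟨r, Set.mem_iUnion.2
      ⟨⟨hq, hr, hqr⟩, (hTmem ω hωN q r hq hr).2 hval⟩⟩⟩)
  -- Step 4: P (S (δ n)) → 0
  have hS0 : Tendsto (fun k : ℕ => P (S (1/(k+1)))) atTop (𝓝 0) := by
    have hanti : Antitone fun k : ℕ => S (1/((k:ℝ)+1)) := by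
      intro k l hkl
      apply hSmono
      have hkl' : ((k:ℝ)+1) ≤ (l:ℝ)+1 := by exact_mod_cast Nat.succ_le_succ hkl
      exact one_div_le_one_div_of_le (by positivity) hkl'
    have h0 : P (⋂ k : ℕ, S (1/((k:ℝ)+1))) = 0 := by
      refine le_antisymm ?_ zero_le
      rw [← hN]
      refine measure_mono fun ω hω => ?_
      by_contra hωN
      have hucont := isCompact_Icc.uniformContinuousOn_of_continuous (hΓ ω)
      rw [Metric.uniformContinuousOn_iff] at hucont
      obtain ⟨θ, hθ, hucont⟩ := hucont (ε/3) hε3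
      obtain ⟨k, hk⟩ := exists_nat_one_div_lt hθ
      have hωk := Set.mem_iInter.1 hω k
      simp only [hS, Set.mem_iUnion] at hωk
      obtain ⟨q, r, ⟨hq, hr, hqr⟩, hqrT⟩ := hωk
      have h1 := (hTmem ω hωN q r hq hr).1 hqrT
      have hd : dist (q:ℝ) (r:ℝ) < θ := by
        rw [Real.dist_eq]
        exact lt_of_le_of_lt hqr hk
      have h2 := hucont _ hq _ hr hd
      rw [Real.dist_eq] at h2
      linarith
    have h := tendsto_measure_iInter_atTop (μ := P)
      (fun k => (hSmeas _).nullMeasurableSet) hanti ⟨0, measure_ne_top P _⟩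
    rw [h0] at h
    exact h
  have hSd : Tendsto (fun n => P (S (δ n))) atTop (𝓝 0) := by
    rw [ENNReal.tendsto_nhds_zero]
    intro η hη
    obtain ⟨k, hk⟩ := (ENNReal.tendsto_nhds_zero.1 hS0 η hη).exists
    filter_upwards [hδ0.eventually (eventually_lt_nhds
      (show (0:ℝ) < 1/((k:ℝ)+1) by positivity))] with n hn
    exact le_trans (measure_mono (hSmono hn.le)) hk
  -- Step 5: the inclusion of events
  have hincl : ∀ᶠ n in atTop,
      {ω | ∃ s ∈ Icc (0:ℝ) 1,
        ε < |(linInterp (jn n) (t n) (γhat n ω) s - γ s) / lam n - Γ ω s|}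
      ⊆ ({ω | ∃ s ∈ Icc (0:ℝ) 1, ε/3 < |(γhat n ω s - γ s) / lam n - Γ ω s|}
          ∪ (S (δ n) ∪ N)) := by
    filter_upwards [hsmooth (ε/3) hε3] with n hsm
    intro ω hω
    simp only [Set.mem_setOf_eq] at hω
    obtain ⟨s, hs, hgt⟩ := hω
    by_contra hnot
    simp only [Set.mem_union, Set.mem_setOf_eq, not_or] at hnot
    obtain ⟨hω1, hω2, hω3⟩ := hnot
    push_neg at hω1
    have hD : ∀ j, 1 ≤ j → j ≤ jn n + 1 → t n j - t n (j-1) ≤ δ n := by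
      intro j h1 h2
      rw [hδ n]
      exact Finset.le_sup' (fun j => t n j - t n (j-1)) (Finset.mem_Icc.mpr ⟨h1, h2⟩)
    obtain ⟨u, v, α, β, hu, hv, hud, hvd, hα, hβ, hαβ, hval⟩ :=
      linInterp_convex (jn n) (t n) (δ n) (hjn n) (ht0 n) (htend n) (htnonneg n) (htle1 n)
        (htmono n) hD s hs
    have Hu : |(γhat n ω u - γ u)/(lam n) - Γ ω u| ≤ ε/3 := hω1 u hu
    have Hv : |(γhat n ω v - γ v)/(lam n) - Γ ω v| ≤ ε/3 := hω1 v hv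
    have Hγu : |γ u - γ s| ≤ ε/3 * lam n := hsm u hu s hs hud
    have Hγv : |γ v - γ s| ≤ ε/3 * lam n := hsm v hv s hs hvd
    have HΓu : |Γ ω u - Γ ω s| ≤ ε/3 := hSkey (δ n) ω hω2 hω3 u hu s hs hud
    have HΓv : |Γ ω v - Γ ω s| ≤ ε/3 := hSkey (δ n) ω hω2 hω3 v hv s hs hvd
    have hkey := key_bound (lam n) (ε/3) (ε/3) (ε/3) (hlam_pos n) (γhat n ω) γ (Γ ω)
      s u v α β hα hβ hαβ Hu Hv Hγu Hγv HΓu HΓv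
    rw [hval (γhat n ω)] at hgt
    linarith
  -- Step 6: conclude
  have hup : Tendsto (fun n => P {ω | ∃ s ∈ Icc (0:ℝ) 1,
      ε/3 < |(γhat n ω s - γ s) / lam n - Γ ω s|} + P (S (δ n))) atTop (𝓝 0) := by
    have h := (hE (ε/3) hε3).add hSd
    simpa using h
  refine tendsto_of_tendsto_of_tendsto_of_le_of_le' tendsto_const_nhds hup
    (Filter.Eventually.of_forall fun n => zero_le) ?_
  filter_upwards [hincl] with n hn
  calc P {ω | ∃ s ∈ Icc (0:ℝ) 1,
        ε < |(linInterp (jn n) (t n) (γhat n ω) s - γ s) / lam n - Γ ω s|}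
      ≤ P ({ω | ∃ s ∈ Icc (0:ℝ) 1, ε/3 < |(γhat n ω s - γ s) / lam n - Γ ω s|}
          ∪ (S (δ n) ∪ N)) := measure_mono hn
    _ ≤ P {ω | ∃ s ∈ Icc (0:ℝ) 1, ε/3 < |(γhat n ω s - γ s) / lam n - Γ ω s|}
          + P (S (δ n) ∪ N) := measure_union_le _ _
    _ ≤ P {ω | ∃ s ∈ Icc (0:ℝ) 1, ε/3 < |(γhat n ω s - γ s) / lam n - Γ ω s|}
          + (P (S (δ n)) + P N) := add_le_add le_rfl (measure_union_le _ _)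
    _ = P {ω | ∃ s ∈ Icc (0:ℝ) 1, ε/3 < |(γhat n ω s - γ s) / lam n - Γ ω s|}
          + P (S (δ n)) := by rw [hN, add_zero]
end

section
/- Assume that h(n) := n/k_n is regularly varying with index κ ∈ (0,1] in the sense that h(⌊cn⌋)/h(n) → c^κ as n → ∞ for every c > 0, that k_{n−1}/k_n − 1 = o(λ_n), and that sup_{c∈[c₀,1]} λ_{⌊cn⌋}/λ_n = O(1) for every c₀ ∈ (0,1). If conditions M(λ_n) and S(λ_n) hold, then sup_{|s−t|≤δ_n} |γ_s − γ_t| = o(λ_n). -/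
open MeasureTheory Filter Topology Set

/-- `gfun y γ = (y^γ - 1)/γ`, read as `log y` for `γ = 0`. -/
noncomputable def gfun (y γ : ℝ) : ℝ := if γ = 0 then Real.log y else (y ^ γ - 1) / γ

lemma rpow_eq_exp {y γ : ℝ} (hy : 0 < y) : y ^ γ = Real.exp (Real.log y * γ) :=
  Real.rpow_def_of_pos hy γ

lemma div_neg_flip (a γ : ℝ) : (a - 1) / γ = (1 - a) / (-γ) := by
  rw [div_neg, ← neg_div, neg_sub]

lemma gfun_nonneg {y γ : ℝ} (hy : 1 ≤ y) : 0 ≤ gfun y γ := by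
  have hy0 : (0:ℝ) < y := lt_of_lt_of_le one_pos hy
  have hL : 0 ≤ Real.log y := Real.log_nonneg hy
  unfold gfun
  rcases lt_trichotomy γ 0 with h | h | h
  · rw [if_neg (ne_of_lt h), div_neg_flip]
    have : y ^ γ ≤ 1 := by
      rw [rpow_eq_exp hy0, ← Real.exp_zero]
      exact Real.exp_le_exp.2 (mul_nonpos_of_nonneg_of_nonpos hL h.le)
    exact div_nonneg (by linarith) (by linarith)
  · rw [if_pos h]; exact hL
  · rw [if_neg (ne_of_gt h)]
    have : 1 ≤ y ^ γ := by
      rw [rpow_eq_exp hy0, ← Real.exp_zero]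
      exact Real.exp_le_exp.2 (mul_nonneg hL h.le)
    exact div_nonneg (by linarith) h.le

lemma gfun_identity {y r : ℝ} (γ : ℝ) (hy : 0 < y) (hr : 0 < r) :
    gfun (y * r) γ = gfun y γ + y ^ γ * gfun r γ := by
  unfold gfun
  by_cases h : γ = 0
  · simp [h, Real.log_mul hy.ne' hr.ne']
  · rw [if_neg h, if_neg h, if_neg h, Real.mul_rpow hy.le hr.le]
    field_simp
    ring

lemma exp_sub_one_le {u : ℝ} : Real.exp u - 1 ≤ u * Real.exp u := by
  have h := Real.add_one_le_exp (-u)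
  have he : 0 < Real.exp u := Real.exp_pos u
  rw [Real.exp_neg u] at h
  have := mul_le_mul_of_nonneg_right h he.le
  rw [inv_mul_cancel₀ he.ne'] at this
  nlinarith

lemma gfun_le {y γ Γ : ℝ} (hy : 1 ≤ y) (hγ : |γ| ≤ Γ) :
    gfun y γ ≤ Real.log y * y ^ Γ := by
  have hy0 : (0:ℝ) < y := lt_of_lt_of_le one_pos hy
  have hL : 0 ≤ Real.log y := Real.log_nonneg hy
  have hΓ : 0 ≤ Γ := le_trans (abs_nonneg γ) hγ
  have hYΓ : 1 ≤ y ^ Γ := by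
    rw [rpow_eq_exp hy0, ← Real.exp_zero]
    exact Real.exp_le_exp.2 (mul_nonneg hL hΓ)
  unfold gfun
  rcases lt_trichotomy γ 0 with h | h | h
  · rw [if_neg (ne_of_lt h)]
    have h1 : 1 - y ^ γ ≤ -γ * Real.log y := by
      rw [rpow_eq_exp hy0]
      have := Real.add_one_le_exp (Real.log y * γ)
      nlinarith
    rw [div_le_iff_of_neg h]
    nlinarith [mul_nonneg (mul_nonneg (neg_nonneg.2 h.le) hL) (sub_nonneg.2 hYΓ)]
  · rw [if_pos h]
    exact le_mul_of_one_le_right hL hYΓ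
  · rw [if_neg (ne_of_gt h)]
    have hγΓ : γ ≤ Γ := le_trans (le_abs_self γ) hγ
    have h1 : y ^ γ - 1 ≤ γ * (Real.log y * y ^ γ) := by
      rw [rpow_eq_exp hy0]
      have := exp_sub_one_le (u := Real.log y * γ)
      nlinarith
    have h2 : y ^ γ ≤ y ^ Γ := by
      rw [rpow_eq_exp hy0, rpow_eq_exp hy0]
      exact Real.exp_le_exp.2 (mul_le_mul_of_nonneg_left hγΓ hL)
    rw [div_le_iff₀ h]
    nlinarith [mul_nonneg (mul_nonneg h.le hL) (sub_nonneg.2 h2)]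

lemma gfun_ge {y γ Γ : ℝ} (hy : 1 ≤ y) (hγ : |γ| ≤ Γ) :
    Real.log y * y ^ (-Γ) ≤ gfun y γ := by
  have hy0 : (0:ℝ) < y := lt_of_lt_of_le one_pos hy
  have hL : 0 ≤ Real.log y := Real.log_nonneg hy
  have hΓ : 0 ≤ Γ := le_trans (abs_nonneg γ) hγ
  have hYΓ : y ^ (-Γ) ≤ 1 := by
    rw [rpow_eq_exp hy0, ← Real.exp_zero]
    exact Real.exp_le_exp.2 (mul_nonpos_of_nonneg_of_nonpos hL (by linarith))
  have hYΓ0 : 0 < y ^ (-Γ) := Real.rpow_pos_of_pos hy0 _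
  unfold gfun
  rcases lt_trichotomy γ 0 with h | h | h
  · rw [if_neg (ne_of_lt h)]
    have hmΓγ : -Γ ≤ γ := (abs_le.1 hγ).1
    have h2 : y ^ (-Γ) ≤ y ^ γ := by
      rw [rpow_eq_exp hy0, rpow_eq_exp hy0]
      exact Real.exp_le_exp.2 (mul_le_mul_of_nonneg_left hmΓγ hL)
    have h1 : (-γ) * Real.log y * y ^ γ ≤ 1 - y ^ γ := by
      rw [rpow_eq_exp hy0]
      have h3 := Real.add_one_le_exp (-(Real.log y * γ))
      have he : 0 < Real.exp (Real.log y * γ) := Real.exp_pos _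
      have h4 := mul_le_mul_of_nonneg_right h3 he.le
      rw [Real.exp_neg, inv_mul_cancel₀ he.ne'] at h4
      nlinarith
    rw [le_div_iff_of_neg h]
    nlinarith [mul_nonneg (mul_nonneg (neg_nonneg.2 h.le) hL) (sub_nonneg.2 h2)]
  · rw [if_pos h]
    calc Real.log y * y ^ (-Γ) ≤ Real.log y * 1 := mul_le_mul_of_nonneg_left hYΓ hL
      _ = Real.log y := mul_one _
  · rw [if_neg (ne_of_gt h)]
    have h1 : γ * Real.log y ≤ y ^ γ - 1 := by
      rw [rpow_eq_exp hy0]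
      have := Real.add_one_le_exp (Real.log y * γ)
      nlinarith
    rw [le_div_iff₀ h]
    nlinarith [mul_nonneg (mul_nonneg h.le hL) (sub_nonneg.2 hYΓ)]

lemma gfun_log_le {y γ : ℝ} (hy : 1 ≤ y) (hγ : 0 ≤ γ) : Real.log y ≤ gfun y γ := by
  have hy0 : (0:ℝ) < y := lt_of_lt_of_le one_pos hy
  unfold gfun
  rcases eq_or_lt_of_le hγ with h | h
  · rw [if_pos h.symm]
  · rw [if_neg (ne_of_gt h)]
    have h1 : γ * Real.log y ≤ y ^ γ - 1 := by
      rw [rpow_eq_exp hy0]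
      have := Real.add_one_le_exp (Real.log y * γ)
      nlinarith
    rw [le_div_iff₀ h]
    nlinarith [Real.log_nonneg hy]


lemma gfun_mono_y {y1 y2 γ : ℝ} (h1 : 1 ≤ y1) (h12 : y1 ≤ y2) :
    gfun y1 γ ≤ gfun y2 γ := by
  have hy10 : (0:ℝ) < y1 := lt_of_lt_of_le one_pos h1
  have hr0 : (0:ℝ) < y2 / y1 := div_pos (lt_of_lt_of_le hy10 h12) hy10
  have hr1 : (1:ℝ) ≤ y2 / y1 := (one_le_div hy10).2 h12
  have hid := gfun_identity (y := y1) (r := y2 / y1) γ hy10 hr0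
  rw [mul_div_cancel₀ _ hy10.ne'] at hid
  nlinarith [Real.rpow_pos_of_pos hy10 γ, gfun_nonneg (y := y2/y1) (γ := γ) hr1]

lemma gfun_lip {y1 y2 B Γ γ : ℝ} (h1 : 1 ≤ y1) (h12 : y1 ≤ y2) (hB : y2 ≤ B)
    (hγ : |γ| ≤ Γ) : gfun y2 γ - gfun y1 γ ≤ B ^ Γ * (B ^ Γ * (y2 - y1)) := by
  have hy10 : (0:ℝ) < y1 := lt_of_lt_of_le one_pos h1
  have hΓ : 0 ≤ Γ := le_trans (abs_nonneg γ) hγ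
  have hB1 : (1:ℝ) ≤ B := le_trans h1 (le_trans h12 hB)
  have hr0 : (0:ℝ) < y2 / y1 := div_pos (lt_of_lt_of_le hy10 h12) hy10
  have hr1 : (1:ℝ) ≤ y2 / y1 := (one_le_div hy10).2 h12
  have hrB : y2 / y1 ≤ B := le_trans (div_le_self (by linarith) h1) hB
  have hid := gfun_identity (y := y1) (r := y2 / y1) γ hy10 hr0
  rw [mul_div_cancel₀ _ hy10.ne'] at hid
  have hgr : gfun (y2 / y1) γ ≤ (y2 - y1) * B ^ Γ := by
    have h2 := gfun_le (y := y2 / y1) (Γ := Γ) hr1 hγ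
    have hlog : Real.log (y2 / y1) ≤ y2 / y1 - 1 := Real.log_le_sub_one_of_pos hr0
    have hrpow : (y2 / y1) ^ Γ ≤ B ^ Γ := Real.rpow_le_rpow (le_of_lt hr0) hrB hΓ
    have hd : y2 / y1 - 1 ≤ y2 - y1 := by
      rw [div_sub_one hy10.ne']
      exact div_le_self (by linarith) h1 |>.trans (le_refl _) |>.trans_eq rfl
    have hrpow0 : 0 ≤ (y2 / y1) ^ Γ := (Real.rpow_pos_of_pos hr0 Γ).le
    calc gfun (y2 / y1) γ ≤ Real.log (y2/y1) * (y2/y1) ^ Γ := h2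
      _ ≤ (y2 - y1) * B ^ Γ := by
          apply mul_le_mul (le_trans hlog hd) hrpow hrpow0 (by linarith)
  have hy1γ : y1 ^ γ ≤ B ^ Γ := by
    calc y1 ^ γ ≤ y1 ^ Γ := Real.rpow_le_rpow_of_exponent_le h1 (le_trans (le_abs_self γ) hγ)
      _ ≤ B ^ Γ := Real.rpow_le_rpow (by linarith) (le_trans h12 hB) hΓ
  have hy1γ0 : 0 < y1 ^ γ := Real.rpow_pos_of_pos hy10 γ
  have hgr0 : 0 ≤ gfun (y2 / y1) γ := gfun_nonneg hr1
  have hBΓ0 : (0:ℝ) ≤ B ^ Γ := (Real.rpow_pos_of_pos (by linarith) Γ).le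
  calc gfun y2 γ - gfun y1 γ = y1 ^ γ * gfun (y2/y1) γ := by linarith
    _ ≤ B ^ Γ * ((y2 - y1) * B ^ Γ) :=
        mul_le_mul hy1γ hgr hgr0 hBΓ0
    _ = B ^ Γ * (B ^ Γ * (y2 - y1)) := by ring

lemma abs_sub_le_exp_abs {a b M : ℝ} (ha : |a| ≤ M) (hb : |b| ≤ M) :
    |a - b| ≤ Real.exp M * |Real.exp a - Real.exp b| := by
  wlog hab : b ≤ a generalizing a b
  · rw [abs_sub_comm, abs_sub_comm (Real.exp a)]
    exact this hb ha (le_of_not_ge hab)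
  have h1 : Real.exp b * (a - b) ≤ Real.exp a - Real.exp b := by
    have := Real.add_one_le_exp (a - b)
    have h2 : Real.exp a = Real.exp b * Real.exp (a - b) := by
      rw [← Real.exp_add]; ring_nf
    nlinarith [Real.exp_pos b]
  have h3 : Real.exp (-M) ≤ Real.exp b := Real.exp_le_exp.2 (by cases abs_le.1 hb; linarith)
  have h4 : Real.exp (-M) * (a - b) ≤ Real.exp a - Real.exp b := by
    nlinarith
  have h5 : Real.exp M * Real.exp (-M) = 1 := by
    rw [← Real.exp_add]; simp
  rw [abs_of_nonneg (by linarith), abs_of_nonneg (by nlinarith [Real.exp_pos b])]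
  nlinarith [Real.exp_pos M]

lemma tau_margin (γ : ℝ → ℝ) (hγcont : ContinuousOn γ (Icc 0 1)) (τ : ℝ)
    (hτ : ∀ s ∈ Icc (0:ℝ) 1, γ s < 0 → τ < -1 / γ s) :
    ∃ c₀ : ℝ, 0 < c₀ ∧ ∃ Y₁ : ℝ, 2 ≤ Y₁ ∧
      ∀ t ∈ Icc (0:ℝ) 1, ∀ y : ℝ, Y₁ ≤ y → τ + c₀ ≤ gfun y (γ t) := by
  have hne : (Icc (0:ℝ) 1).Nonempty := ⟨0, le_refl 0, zero_le_one⟩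
  by_cases hτ0 : τ < 0
  · refine ⟨-τ/2, by linarith, 2, le_refl 2, fun t ht y hy => ?_⟩
    have := gfun_nonneg (y := y) (γ := γ t) (by linarith)
    linarith
  push_neg at hτ0
  -- bound on |γ|
  obtain ⟨t₁, ht₁, hmax⟩ := isCompact_Icc.exists_isMaxOn hne (hγcont.abs)
  set Γ := |γ t₁| with hΓdef
  have hΓ0 : 0 ≤ Γ := abs_nonneg _
  have hΓ : ∀ t ∈ Icc (0:ℝ) 1, |γ t| ≤ Γ := fun t ht => hmax ht
  -- min of ψ
  have hψcont : ContinuousOn (fun t => min (1 + τ * γ t) 1) (Icc (0:ℝ) 1) := by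
    have hcont : Continuous (fun x : ℝ => min (1 + τ * x) 1) :=
      (continuous_const.add (continuous_const.mul continuous_id)).min continuous_const
    exact hcont.comp_continuousOn hγcont
  obtain ⟨t₀, ht₀, hmin⟩ := isCompact_Icc.exists_isMinOn hne hψcont
  set m₀ := min (1 + τ * γ t₀) 1 with hm₀def
  have hm₀pos : 0 < m₀ := by
    rcases lt_or_ge (γ t₀) 0 with hg | hg
    · have h1 := hτ t₀ ht₀ hg
      have h2 : τ * γ t₀ > (-1 / γ t₀) * γ t₀ := by
        exact mul_lt_mul_of_neg_right h1 hg
      rw [div_mul_cancel₀ (-1) (ne_of_lt hg)] at h2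
      exact lt_min (by linarith) one_pos
    · exact lt_min (by nlinarith) one_pos
  have hm₀le : ∀ t ∈ Icc (0:ℝ) 1, m₀ ≤ 1 + τ * γ t := by
    intro t ht
    exact le_trans (hmin ht) (min_le_left _ _)
  have hm₀1 : m₀ ≤ 1 := min_le_right _ _
  set c₀ := m₀ / (2 * (Γ + 1)) with hc₀def
  have hc₀pos : 0 < c₀ := div_pos hm₀pos (by linarith)
  set τ' := τ + c₀ with hτ'def
  have hτ'pos : 0 < τ' := by positivity
  set m' := m₀ / 2 with hm'def
  have hm'pos : 0 < m' := by positivity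
  have hkey : ∀ t ∈ Icc (0:ℝ) 1, m' ≤ 1 + τ' * γ t := by
    intro t ht
    have h1 := hm₀le t ht
    have h2 : |γ t| ≤ Γ := hΓ t ht
    have h3 : c₀ * γ t ≥ -(c₀ * Γ) := by
      have := neg_abs_le (γ t)
      nlinarith [abs_le.1 h2]
    have h4 : c₀ * Γ ≤ m₀ / 2 := by
      rw [hc₀def]
      rw [div_mul_eq_mul_div, div_le_div_iff₀ (by linarith) (by norm_num : (0:ℝ) < 2)]
      nlinarith
    have : τ' * γ t = τ * γ t + c₀ * γ t := by ring
    rw [this]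
    linarith
  refine ⟨c₀, hc₀pos, max 2 (Real.exp (τ' + τ' / m')), le_max_left _ _, fun t ht y hy => ?_⟩
  have hy2 : (2:ℝ) ≤ y := le_trans (le_max_left _ _) hy
  have hy1 : (1:ℝ) ≤ y := by linarith
  have hy0 : (0:ℝ) < y := by linarith
  have hlog : τ' + τ' / m' ≤ Real.log y :=
    (Real.le_log_iff_exp_le hy0).2 (le_trans (le_max_right _ _) hy)
  have hdiv0 : 0 ≤ τ' / m' := le_of_lt (div_pos hτ'pos hm'pos)
  have hlog1 : τ' ≤ Real.log y := by linarith
  have hlog2 : τ' / m' ≤ Real.log y := by linarith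
  rcases le_or_gt 0 (γ t) with hg | hg
  · exact le_trans hlog1 (gfun_log_le hy1 hg)
  · -- γ t < 0 case
    set g := γ t with hgdef
    have hL0 : 0 < Real.log y := Real.log_pos (by linarith)
    have hmt := hkey t ht
    have hv0 : 0 < (-g) * Real.log y := mul_pos (by linarith) hL0
    -- y ^ g ≤ 1/(1 + v)
    have hstep1 : y ^ g ≤ 1 / (1 + (-g) * Real.log y) := by
      rw [rpow_eq_exp hy0]
      have h3 := Real.add_one_le_exp ((-g) * Real.log y)
      have he : 0 < Real.exp ((-g) * Real.log y) := Real.exp_pos _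
      have heq : Real.exp (Real.log y * g) = (Real.exp ((-g) * Real.log y))⁻¹ := by
        rw [← Real.exp_neg]; ring_nf
      rw [heq, one_div]
      exact inv_anti₀ (by linarith) (by linarith)
    have hstep2 : 1 / (1 + (-g) * Real.log y) ≤ 1 + τ' * g := by
      rw [div_le_iff₀ (by linarith)]
      have hmul : (-g) * (τ' / m' * m') ≤ (-g) * (Real.log y * (1 + τ' * g)) := by
        apply mul_le_mul_of_nonneg_left _ (by linarith)
        exact mul_le_mul hlog2 hmt hm'pos.le hL0.le
      rw [div_mul_cancel₀ _ hm'pos.ne'] at hmul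
      nlinarith
    have hyg : y ^ g ≤ 1 + τ' * g := le_trans hstep1 hstep2
    have : gfun y g = (y ^ g - 1) / g := by
      unfold gfun; rw [if_neg (ne_of_lt hg)]
    rw [this, le_div_iff_of_neg hg]
    linarith


section cdf
variable {Ω : Type*} [MeasurableSpace Ω] (P : Measure Ω) [IsProbabilityMeasure P]

lemma cdf_mono (f : Ω → ℝ) {a b : ℝ} (hab : a ≤ b) :
    (P {ω | f ω ≤ a}).toReal ≤ (P {ω | f ω ≤ b}).toReal := by
  apply ENNReal.toReal_mono (measure_ne_top P _)
  exact measure_mono (fun ω h => le_trans h hab)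

lemma cdf_exists_ge (f : Ω → ℝ) {p : ℝ} (hp : p < 1) :
    ∃ z : ℝ, p ≤ (P {ω | f ω ≤ z}).toReal := by
  have hmono : Monotone (fun m : ℕ => {ω | f ω ≤ (m:ℝ)}) := by
    intro m m' hmm' ω hω
    simp only [mem_setOf_eq] at *
    have : (m:ℝ) ≤ (m':ℝ) := by exact_mod_cast hmm'
    linarith
  have htend := tendsto_measure_iUnion_atTop (μ := P) hmono
  have hU : (⋃ m : ℕ, {ω | f ω ≤ (m:ℝ)}) = univ := by
    ext ω; simp only [mem_iUnion, mem_setOf_eq, mem_univ, iff_true]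
    obtain ⟨m, hm⟩ := exists_nat_ge (f ω)
    exact ⟨m, hm⟩
  rw [hU, measure_univ] at htend
  have htoReal : Tendsto (fun m : ℕ => (P {ω | f ω ≤ (m:ℝ)}).toReal) atTop (𝓝 1) := by
    have := (ENNReal.tendsto_toReal (a := 1) (by simp)).comp htend
    simpa [Function.comp_def] using this
  obtain ⟨m, hm⟩ := (htoReal.eventually (eventually_ge_nhds hp)).exists
  exact ⟨(m:ℝ), hm⟩

lemma cdf_exists_lt (f : Ω → ℝ) (hf : Measurable f) {p : ℝ} (hp : 0 < p) :
    ∃ z : ℝ, (P {ω | f ω ≤ z}).toReal < p := by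
  have hanti : Antitone (fun m : ℕ => {ω | f ω ≤ -(m:ℝ)}) := by
    intro m m' hmm' ω hω
    simp only [mem_setOf_eq] at *
    have : (m:ℝ) ≤ (m':ℝ) := by exact_mod_cast hmm'
    linarith
  have hmeas : ∀ m : ℕ, NullMeasurableSet {ω | f ω ≤ -(m:ℝ)} P :=
    fun m => (hf measurableSet_Iic).nullMeasurableSet
  have htend := tendsto_measure_iInter_atTop (μ := P) hmeas hanti ⟨0, measure_ne_top P _⟩
  have hI : (⋂ m : ℕ, {ω | f ω ≤ -(m:ℝ)}) = ∅ := by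
    ext ω; simp only [mem_iInter, mem_setOf_eq, mem_empty_iff_false, iff_false, not_forall]
    obtain ⟨m, hm⟩ := exists_nat_gt (-f ω)
    exact ⟨m, by push_neg; linarith⟩
  rw [hI, measure_empty] at htend
  have htoReal : Tendsto (fun m : ℕ => (P {ω | f ω ≤ -(m:ℝ)}).toReal) atTop (𝓝 0) := by
    have := (ENNReal.tendsto_toReal (a := 0) (by simp)).comp htend
    simpa [Function.comp_def] using this
  obtain ⟨m, hm⟩ := (htoReal.eventually (eventually_lt_nhds hp)).exists
  exact ⟨-(m:ℝ), hm⟩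

lemma prob_gt_toReal (f : Ω → ℝ) (hf : Measurable f) (x : ℝ) :
    (P {ω | x < f ω}).toReal = 1 - (P {ω | f ω ≤ x}).toReal := by
  have hms : MeasurableSet {ω | f ω ≤ x} := hf measurableSet_Iic
  have hc : {ω | x < f ω} = {ω | f ω ≤ x}ᶜ := by
    ext ω; simp [not_le]
  rw [hc, measure_compl hms (measure_ne_top P _), measure_univ,
    ENNReal.toReal_sub_of_le prob_le_one ENNReal.one_ne_top, ENNReal.toReal_one]

lemma quantile_tail (f : Ω → ℝ) (hf : Measurable f) {p : ℝ} (hp0 : 0 < p) (hp1 : p < 1) :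
    1 - p ≤ (P {ω | sInf {x | p ≤ (P {ω' | f ω' ≤ x}).toReal} ≤ f ω}).toReal := by
  set cdf := fun x => (P {ω' | f ω' ≤ x}).toReal with hcdf
  obtain ⟨z₀, hz₀⟩ := cdf_exists_lt P f hf hp0
  have hbdd : BddBelow {x | p ≤ cdf x} := by
    refine ⟨z₀, fun z hz => ?_⟩
    by_contra hcon
    push_neg at hcon
    exact absurd hz (not_le.2 (lt_of_le_of_lt (cdf_mono P f hcon.le) hz₀))
  set Q := sInf {x | p ≤ cdf x} with hQ
  have hlt : ∀ z, z < Q → cdf z < p := by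
    intro z hz
    by_contra hcon
    push_neg at hcon
    exact absurd (csInf_le hbdd hcon) (not_le.2 hz)
  set E : ℕ → Set Ω := fun m => {ω | Q - 1/((m:ℝ)+1) < f ω} with hE
  have hEmeas : ∀ m, NullMeasurableSet (E m) P :=
    fun m => (hf measurableSet_Ioi).nullMeasurableSet
  have hanti : Antitone E := by
    intro m m' hmm' ω hω
    simp only [hE, mem_setOf_eq] at *
    have h1 : 1/((m':ℝ)+1) ≤ 1/((m:ℝ)+1) := by
      apply one_div_le_one_div_of_le (by positivity)
      have : (m:ℝ) ≤ (m':ℝ) := by exact_mod_cast hmm'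
      linarith
    linarith
  have hInter : (⋂ m, E m) = {ω | Q ≤ f ω} := by
    ext ω
    simp only [hE, mem_iInter, mem_setOf_eq]
    constructor
    · intro hω
      by_contra hcon
      push_neg at hcon
      obtain ⟨m, hm⟩ := exists_nat_one_div_lt (sub_pos.2 hcon)
      have := hω m
      linarith
    · intro hω m
      have : 0 < 1/((m:ℝ)+1) := by positivity
      linarith
  have htend := tendsto_measure_iInter_atTop (μ := P) hEmeas hanti ⟨0, measure_ne_top P _⟩
  rw [hInter] at htend
  have htoReal : Tendsto (fun m => (P (E m)).toReal) atTop
      (𝓝 ((P {ω | Q ≤ f ω}).toReal)) :=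
    (ENNReal.tendsto_toReal (measure_ne_top P _)).comp htend
  apply ge_of_tendsto htoReal
  filter_upwards with m
  have hsub : 0 < 1/((m:ℝ)+1) := by positivity
  have h1 : cdf (Q - 1/((m:ℝ)+1)) < p := hlt _ (by linarith)
  have h2 : (P (E m)).toReal = 1 - cdf (Q - 1/((m:ℝ)+1)) := prob_gt_toReal P f hf _
  rw [h2]
  linarith

lemma quantile_ge (f : Ω → ℝ) {p x : ℝ} (hp : p < 1)
    (hx : (P {ω | f ω ≤ x}).toReal < p) :
    x ≤ sInf {z | p ≤ (P {ω | f ω ≤ z}).toReal} := by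
  obtain ⟨z₁, hz₁⟩ := cdf_exists_ge P f hp
  apply le_csInf (s := {z | p ≤ (P {ω | f ω ≤ z}).toReal}) ⟨z₁, hz₁⟩
  intro z hz
  simp only [mem_setOf_eq] at hz
  by_contra hcon
  push_neg at hcon
  exact absurd hz (not_le.2 (lt_of_le_of_lt (cdf_mono P f hcon.le) hx))

lemma chain_step (f g : Ω → ℝ) (hf : Measurable f) (hg : Measurable g)
    (au lam e1 e' h τ Yt y' Tu : ℝ)
    (hau : 0 < au) (hlam : 0 < lam) (he1 : 0 < e1) (he' : 0 < e') (hh : 1 < h)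
    (hy'1 : 1 ≤ y') (hYt1 : 1 ≤ Yt)
    (hYt : 1/Yt + e' * lam < 1/y')
    (hB : (P {ω | e1 * lam < |f ω - g ω| / au ∧ Tu + τ * au < g ω}).toReal ≤ e' * lam / h)
    (hthr : Tu + τ * au + 2*(e1*lam*au) ≤ sInf {x | 1 - 1/(y'*h) ≤ (P {ω | g ω ≤ x}).toReal}) :
    sInf {x | 1 - 1/(y'*h) ≤ (P {ω | g ω ≤ x}).toReal} - 2*(e1*lam*au)
      ≤ sInf {x | 1 - 1/(Yt*h) ≤ (P {ω | f ω ≤ x}).toReal} := by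
  set Qu := sInf {x | 1 - 1/(y'*h) ≤ (P {ω | g ω ≤ x}).toReal} with hQu
  set x := Qu - 2*(e1*lam*au) with hxdef
  have hy'h : 1 < y' * h := by nlinarith
  have hYth : 1 < Yt * h := by nlinarith
  have hpU0 : 0 < 1 - 1/(y'*h) := by
    have : 1/(y'*h) < 1 := by
      rw [div_lt_one (by linarith)]; linarith
    linarith
  have hpU1 : 1 - 1/(y'*h) < 1 := by
    have : 0 < 1/(y'*h) := by positivity
    linarith
  have htail := quantile_tail P g hg hpU0 hpU1
  rw [← hQu] at htail
  have hEl : 0 < e1*lam*au := by positivity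
  have hincl : {ω | Qu ≤ g ω} ⊆ {ω | x < f ω} ∪
      {ω | e1 * lam < |f ω - g ω| / au ∧ Tu + τ * au < g ω} := by
    intro ω hω
    simp only [mem_setOf_eq] at hω
    by_cases hfx : x < f ω
    · exact Or.inl hfx
    · push_neg at hfx
      refine Or.inr ⟨?_, by linarith⟩
      rw [lt_div_iff₀ hau]
      have h1 : g ω - f ω ≥ 2*(e1*lam*au) := by
        rw [hxdef] at hfx; linarith
      have h2 : |f ω - g ω| ≥ g ω - f ω := by
        rw [abs_sub_comm]; exact le_abs_self _
      nlinarith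
  have hsub : P {ω | Qu ≤ g ω} ≤ P {ω | x < f ω} +
      P {ω | e1 * lam < |f ω - g ω| / au ∧ Tu + τ * au < g ω} :=
    le_trans (measure_mono hincl) (measure_union_le _ _)
  have h1 : (P {ω | Qu ≤ g ω}).toReal ≤ (P {ω | x < f ω}).toReal +
      (P {ω | e1 * lam < |f ω - g ω| / au ∧ Tu + τ * au < g ω}).toReal := by
    rw [← ENNReal.toReal_add (measure_ne_top P _) (measure_ne_top P _)]
    exact ENNReal.toReal_mono
      (ENNReal.add_ne_top.2 ⟨measure_ne_top P _, measure_ne_top P _⟩) hsub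
  have h2 : 1/(y'*h) - e'*lam/h ≤ (P {ω | x < f ω}).toReal := by
    have h1p : 1 - (1 - 1/(y'*h)) = 1/(y'*h) := by ring
    rw [h1p] at htail
    linarith
  have h3 : (P {ω | f ω ≤ x}).toReal ≤ 1 - (1/(y'*h) - e'*lam/h) := by
    have := prob_gt_toReal P f hf x
    linarith
  have halg : 1/(Yt*h) + e'*lam/h < 1/(y'*h) := by
    have hh0 : (0:ℝ) < h := by linarith
    have hd : (1/Yt + e'*lam)/h < (1/y')/h := div_lt_div_of_pos_right hYt hh0
    rw [add_div, div_div, div_div] at hd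
    exact hd
  have h4 : (P {ω | f ω ≤ x}).toReal < 1 - 1/(Yt*h) := by linarith
  have hp1 : 1 - 1/(Yt*h) < 1 := by
    have : 0 < 1/(Yt*h) := by positivity
    linarith
  exact quantile_ge P f hp1 h4
end cdf


lemma inv_step {As Au ws wu Gs Gu d0 D0 W R E : ℝ}
    (hAs : 0 < As) (hAu : 0 < Au) (hd0 : 0 < d0) (hW : 1 ≤ W)
    (hwu0 : 0 < wu) (hwuW : wu ≤ W)
    (hs_lb : d0 ≤ ws * Gs) (hu_lb : d0 ≤ wu * Gu) (hu_ub : wu * Gu ≤ D0)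
    (hR : R = (8*D0 + d0) / (7*d0))
    (hE : 0 ≤ E) (hE1 : E * (R+1) ≤ d0/2) (hE2 : E ≤ d0/8)
    (hII : |As*(ws*Gs) - Au*(wu*Gu)| ≤ E*(As+Au))
    (hIII : |As*(ws*(ws*Gs)) - Au*(wu*(wu*Gu))| ≤ E*(As+Au)) :
    |ws - wu| ≤ 2*(1+W)*(R+1)/d0 * E := by
  obtain ⟨hII1, hII2⟩ := abs_le.1 hII
  have hD0 : d0 ≤ D0 := le_trans hu_lb hu_ub
  have h7 : (0:ℝ) < 7*d0 := by linarith
  -- As ≤ Au * R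
  have hAsd : As*d0 ≤ As*(ws*Gs) := mul_le_mul_of_nonneg_left hs_lb hAs.le
  have hAuD : Au*(wu*Gu) ≤ Au*D0 := mul_le_mul_of_nonneg_left hu_ub hAu.le
  have hE8 : E*(As+Au) ≤ (d0/8)*(As+Au) :=
    mul_le_mul_of_nonneg_right hE2 (by linarith)
  have hAsR : As ≤ Au * R := by
    rw [hR, mul_div_assoc']
    rw [le_div_iff₀ h7]
    nlinarith
  have hRpos : 0 < R := by
    rw [hR]; exact div_pos (by linarith) h7
  have hSum : As + Au ≤ (R+1)*Au := by nlinarith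
  have hEsum : E*(As+Au) ≤ E*((R+1)*Au) := mul_le_mul_of_nonneg_left hSum hE
  have hE1Au : E*((R+1)*Au) ≤ (d0/2)*Au := by
    have := mul_le_mul_of_nonneg_right hE1 hAu.le
    nlinarith
  -- lower bound on p := As*(ws*Gs)
  have hAud : Au*d0 ≤ Au*(wu*Gu) := mul_le_mul_of_nonneg_left hu_lb hAu.le
  have hp_lb : (d0/2)*Au ≤ As*(ws*Gs) := by nlinarith
  -- key product bound
  have habs1 : |As*(ws*(ws*Gs)) - As*(ws*Gs)*wu| ≤
      |As*(ws*(ws*Gs)) - Au*(wu*(wu*Gu))| + |Au*(wu*(wu*Gu)) - As*(ws*Gs)*wu| :=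
    abs_sub_le _ _ _
  have habs2 : |Au*(wu*(wu*Gu)) - As*(ws*Gs)*wu| ≤ W*(E*(As+Au)) := by
    have heq : Au*(wu*(wu*Gu)) - As*(ws*Gs)*wu = wu * (Au*(wu*Gu) - As*(ws*Gs)) := by
      ring
    rw [heq, abs_mul, abs_of_pos hwu0, abs_sub_comm]
    exact mul_le_mul hwuW hII (abs_nonneg _) (by linarith)
  have habs3 : As*(ws*Gs)*|ws - wu| ≤ (1+W)*(E*(As+Au)) := by
    have heq : As*(ws*(ws*Gs)) - As*(ws*Gs)*wu = (As*(ws*Gs))*(ws - wu) := by ring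
    have h1 : |(As*(ws*Gs))*(ws - wu)| = As*(ws*Gs)*|ws - wu| := by
      rw [abs_mul, abs_of_pos (by nlinarith : (0:ℝ) < As*(ws*Gs))]
    calc As*(ws*Gs)*|ws - wu| = |As*(ws*(ws*Gs)) - As*(ws*Gs)*wu| := by
          rw [heq, h1]
      _ ≤ |As*(ws*(ws*Gs)) - Au*(wu*(wu*Gu))| + |Au*(wu*(wu*Gu)) - As*(ws*Gs)*wu| := habs1
      _ ≤ E*(As+Au) + W*(E*(As+Au)) := add_le_add hIII habs2
      _ = (1+W)*(E*(As+Au)) := by ring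
  have hfin : (d0/2)*Au*|ws - wu| ≤ (1+W)*((R+1)*Au)*E := by
    have h4 : (d0/2)*Au*|ws - wu| ≤ As*(ws*Gs)*|ws - wu| :=
      mul_le_mul_of_nonneg_right hp_lb (abs_nonneg _)
    have h5 : (1+W)*(E*(As+Au)) ≤ (1+W)*(E*((R+1)*Au)) :=
      mul_le_mul_of_nonneg_left hEsum (by linarith)
    have h6 : (1+W)*(E*((R+1)*Au)) = (1+W)*((R+1)*Au)*E := by ring
    linarith [habs3]
  -- divide by Au and d0/2
  have h9 : ((d0/2)*|ws - wu|)*Au ≤ ((1+W)*(R+1)*E)*Au := by linarith [hfin]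
  have h10 : (d0/2)*|ws - wu| ≤ (1+W)*(R+1)*E := le_of_mul_le_mul_right h9 hAu
  rw [div_mul_eq_mul_div, le_div_iff₀ hd0]
  linarith

set_option maxHeartbeats 2000000 in
/-- Theorem 2: under regular variation of `n/kₙ` and conditions M(λₙ)
and S(λₙ), sup_{|s-t|≤δₙ} |γ_s - γ_t| = o(λₙ). -/
theorem gamma_local_oscillation
    {Ω : Type*} [MeasurableSpace Ω] (P : Measure Ω) [IsProbabilityMeasure P]
    (X : Ω → ℝ → ℝ)
    (hXmeas : ∀ s, Measurable fun ω => X ω s)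
    (hXcont : ∀ ω, ContinuousOn (X ω) (Icc 0 1))
    (γ : ℝ → ℝ) (hγcont : ContinuousOn γ (Icc 0 1))
    (F U : ℝ → ℝ → ℝ)
    (hF : ∀ s x, F s x = (P {ω | X ω s ≤ x}).toReal)
    (hU : ∀ s y, U s y = sInf {x : ℝ | 1 - 1 / y ≤ F s x})
    (A : ℕ → ℝ → ℝ) (hApos : ∀ n, ∀ s ∈ Icc (0:ℝ) 1, 0 < A n s)
    (k : ℕ → ℕ) (hk : ∀ n, 1 ≤ n → 1 ≤ k n ∧ k n ≤ n)
    (hkinfty : Tendsto (fun n : ℕ => (k n : ℝ)) atTop atTop)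
    (hkn0 : Tendsto (fun n : ℕ => (k n : ℝ) / n) atTop (𝓝 0))
    (lam : ℕ → ℝ) (hlam_pos : ∀ n, 0 < lam n) (hlam_bdd : ∃ C, ∀ n, lam n ≤ C)
    (δ : ℕ → ℝ) (hδpos : ∀ n, 0 < δ n) (hδ0 : Tendsto δ atTop (𝓝 0))
    -- h(n) = n/kₙ is regularly varying with index κ ∈ (0,1]
    (κ : ℝ) (hκpos : 0 < κ) (hκle : κ ≤ 1)
    (hRV : ∀ c > 0, Tendsto
      (fun n : ℕ => ((⌊c * (n : ℝ)⌋₊ : ℝ) / (k ⌊c * (n : ℝ)⌋₊ : ℝ)) / ((n : ℝ) / (k n : ℝ)))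
      atTop (𝓝 (c ^ κ)))
    -- k_{n-1}/kₙ - 1 = o(λₙ)
    (hkratio : ∀ ε > 0, ∀ᶠ n : ℕ in atTop, |(k (n - 1) : ℝ) / (k n : ℝ) - 1| ≤ ε * lam n)
    -- sup_{c ∈ [c₀,1]} λ_{⌊cn⌋}/λₙ = O(1)
    (hlamO : ∀ c₀ : ℝ, 0 < c₀ → c₀ < 1 → ∃ C : ℝ, ∀ᶠ n : ℕ in atTop,
      ∀ c ∈ Icc c₀ 1, lam ⌊c * (n : ℝ)⌋₊ / lam n ≤ C)
    -- the constant τ of condition S(λₙ): τ < τ_max = inf_t 1/γ_t⁻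
    (τ : ℝ) (hτ : ∀ s ∈ Icc (0:ℝ) 1, γ s < 0 → τ < -1 / γ s)
    -- condition M(λₙ)
    (hM : ∀ y₀ y₁ : ℝ, 0 < y₀ → y₀ < y₁ → ∀ ε > 0, ∀ᶠ n : ℕ in atTop,
      ∀ s ∈ Icc (0:ℝ) 1, ∀ y ∈ Icc y₀ y₁,
        |(U s (y * ((n : ℝ) / (k n : ℝ))) - U s ((n : ℝ) / (k n : ℝ))) / A n s
          - gfun y (γ s)| ≤ ε * lam n)
    -- condition S(λₙ)
    (hS : ∀ ε > 0, ∀ ε' > 0, ∀ᶠ n : ℕ in atTop,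
      ∀ s ∈ Icc (0:ℝ) 1, ∀ u ∈ Icc (0:ℝ) 1, |s - u| ≤ δ n →
        (P {ω | ε * lam n < |X ω s - X ω u| / A n u ∧
            U u ((n : ℝ) / (k n : ℝ)) + τ * A n u < X ω u}).toReal
          ≤ ε' * (lam n * (k n : ℝ) / n)) :
    ∀ ε > 0, ∀ᶠ n : ℕ in atTop,
      ∀ s ∈ Icc (0:ℝ) 1, ∀ u ∈ Icc (0:ℝ) 1, |s - u| ≤ δ n →
        |γ s - γ u| ≤ ε * lam n := by
  intro ε hε
  -- global bound on lam
  obtain ⟨C0, hC0⟩ := hlam_bdd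
  set C := max C0 1 with hCdef
  have hC1 : (1:ℝ) ≤ C := le_max_right _ _
  have hCpos : (0:ℝ) < C := by linarith
  have hC : ∀ n, lam n ≤ C := fun n => le_trans (hC0 n) (le_max_left _ _)
  -- bound on |γ|
  have hne : (Icc (0:ℝ) 1).Nonempty := ⟨0, le_refl 0, zero_le_one⟩
  obtain ⟨t₁, ht₁, hmaxγ⟩ := isCompact_Icc.exists_isMaxOn hne hγcont.abs
  set Γ := |γ t₁| with hΓdef
  have hΓ0 : 0 ≤ Γ := abs_nonneg _
  have hΓ : ∀ t ∈ Icc (0:ℝ) 1, |γ t| ≤ Γ := fun t ht => hmaxγ ht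
  -- τ margin
  obtain ⟨c₀, hc₀, Y₁, hY₁2, hmargin⟩ := tau_margin γ hγcont τ hτ
  set Y := 2 * Y₁ with hYdef
  have hY4 : (4:ℝ) ≤ Y := by linarith
  have hY1 : (1:ℝ) ≤ Y := by linarith
  have hY0 : (0:ℝ) < Y := by linarith
  set B := Y * Y * Y with hBdef
  have hYY : (1:ℝ) ≤ Y*Y := le_trans hY1 (le_mul_of_one_le_left hY0.le hY1)
  have hBY : Y ≤ B := by rw [hBdef]; exact le_mul_of_one_le_left hY0.le hYY
  have hB1 : (1:ℝ) ≤ B := le_trans hY1 hBY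
  have hB0 : (0:ℝ) < B := by linarith
  have hB2 : (2:ℝ) < B := by linarith only [hBY, hY4]
  set L := Real.log Y with hLdef
  have hL0 : 0 < L := Real.log_pos (by linarith)
  set W := Y ^ Γ with hWdef
  have hW0 : 0 < W := Real.rpow_pos_of_pos hY0 _
  have hW1 : (1:ℝ) ≤ W := by
    rw [hWdef, rpow_eq_exp hY0, ← Real.exp_zero]
    exact Real.exp_le_exp.2 (mul_nonneg hL0.le hΓ0)
  have hYmΓ0 : 0 < Y ^ (-Γ) := Real.rpow_pos_of_pos hY0 _
  set d0 := Y ^ (-Γ) * (L * Y ^ (-Γ)) with hd0def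
  have hd0 : 0 < d0 := by
    apply mul_pos hYmΓ0 (mul_pos hL0 hYmΓ0)
  set D0 := W * (L * W) with hD0def
  have hD0pos : 0 < D0 := mul_pos hW0 (mul_pos hL0 hW0)
  set R := (8*D0 + d0)/(7*d0) with hRdef
  have hRpos : 0 < R := div_pos (by linarith) (by linarith)
  have hBΓ0 : 0 < B ^ Γ := Real.rpow_pos_of_pos hB0 _
  set KL := B ^ Γ * (B ^ Γ * (2 * (B * B))) with hKLdef
  have hKL0 : 0 < KL := by
    apply mul_pos hBΓ0 (mul_pos hBΓ0 (mul_pos (by norm_num) (mul_pos hB0 hB0)))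
  set Kpart := 2*(1+W)*(R+1)/d0 with hKpartdef
  have hKpart0 : 0 < Kpart := by
    apply div_pos (mul_pos (mul_pos (by norm_num) (by linarith)) (by linarith)) hd0
  set Kfin := Real.exp (L*Γ)/L * Kpart * (2*(3+KL)) with hKfindef
  have hKfin0 : 0 < Kfin := by
    apply mul_pos (mul_pos (div_pos (Real.exp_pos _) hL0) hKpart0) (by linarith)
  -- choice of e
  set e := min (min (c₀/(3*C)) (d0/(4*((3+KL)*C*(R+1))))) (min (min (d0/(16*((3+KL)*C))) (ε/Kfin)) (1/(2*C*Y))) with hedef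
  have hKLCR : (0:ℝ) < (3+KL)*C*(R+1) :=
    mul_pos (mul_pos (by linarith) hCpos) (by linarith)
  have hKLC : (0:ℝ) < (3+KL)*C := mul_pos (by linarith) hCpos
  have h2CY : (0:ℝ) < 2*C*Y := mul_pos (mul_pos (by norm_num) hCpos) hY0
  clear_value C Γ Y B L W d0 D0 R KL Kpart Kfin e
  have he : 0 < e := by
    rw [hedef]
    apply lt_min (lt_min (div_pos hc₀ (by linarith)) (div_pos hd0 (by linarith)))
      (lt_min (lt_min (div_pos hd0 (by linarith)) (div_pos hε hKfin0))
        (div_pos one_pos h2CY))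
  have hcap1 : e ≤ c₀/(3*C) := by
    rw [hedef]; exact le_trans (min_le_left _ _) (min_le_left _ _)
  have hcap2 : e ≤ d0/(4*((3+KL)*C*(R+1))) := by
    rw [hedef]; exact le_trans (min_le_left _ _) (min_le_right _ _)
  have hcap3 : e ≤ d0/(16*((3+KL)*C)) := by
    rw [hedef]; exact le_trans (min_le_right _ _) (le_trans (min_le_left _ _) (min_le_left _ _))
  have hcap4 : e ≤ ε/Kfin := by
    rw [hedef]; exact le_trans (min_le_right _ _) (le_trans (min_le_left _ _) (min_le_right _ _))
  have hcap5 : e ≤ 1/(2*C*Y) := by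
    rw [hedef]; exact le_trans (min_le_right _ _) (min_le_right _ _)
  -- eventual facts
  have hMev := hM 2 B (by norm_num) hB2 e he
  have hSev := hS e he e he
  have hhev : ∀ᶠ n : ℕ in atTop, (k n : ℝ)/(n:ℝ) < 1/2 :=
    hkn0.eventually (eventually_lt_nhds (by norm_num))
  have hnev : ∀ᶠ n : ℕ in atTop, 1 ≤ n := eventually_ge_atTop 1
  filter_upwards [hMev, hSev, hhev, hnev] with n hMn hSn hhn hn1
  intro s hs u hu hsu
  -- basic per-n facts
  have hk1 : 1 ≤ k n := (hk n hn1).1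
  have hkr : (1:ℝ) ≤ (k n : ℝ) := by exact_mod_cast hk1
  have hk0 : (0:ℝ) < (k n : ℝ) := by linarith
  have hn0 : (0:ℝ) < (n:ℝ) := by
    have : 0 < n := hn1
    exact_mod_cast this
  set h := (n:ℝ)/(k n : ℝ) with hhdef
  clear_value h
  have hh0 : 0 < h := by rw [hhdef]; exact div_pos hn0 hk0
  have h2k : 2*(k n : ℝ) < (n:ℝ) := by
    rw [div_lt_div_iff₀ hn0 (by norm_num : (0:ℝ) < 2)] at hhn
    linarith only [hhn]
  have hh1 : 1 < h := by
    rw [hhdef, lt_div_iff₀ hk0]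
    linarith only [h2k, hkr]
  have hlamn := hlam_pos n
  have hlamC := hC n
  have hel0 : 0 < e * lam n := mul_pos he hlamn
  have h2eC : 2*(e*lam n) ≤ 1/Y := by
    have h1 : e * (2*C*Y) ≤ (1/(2*C*Y)) * (2*C*Y) :=
      mul_le_mul_of_nonneg_right hcap5 h2CY.le
    rw [one_div, inv_mul_cancel₀ h2CY.ne'] at h1
    rw [le_div_iff₀ hY0]
    have hp : 0 ≤ (2*e*Y)*(C - lam n) :=
      mul_nonneg (mul_nonneg (mul_nonneg (by norm_num) he.le) hY0.le)
        (by linarith only [hlamC])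
    linarith only [h1, hp]
  have hc3 : 3*(e*lam n) ≤ c₀ := by
    have h1 : e * (3*C) ≤ (c₀/(3*C)) * (3*C) :=
      mul_le_mul_of_nonneg_right hcap1 (by linarith)
    rw [div_mul_cancel₀ _ (by linarith : (3:ℝ)*C ≠ 0)] at h1
    have hp : 0 ≤ (3*e)*(C - lam n) :=
      mul_nonneg (by linarith only [he]) (by linarith only [hlamC])
    linarith only [h1, hp]
  -- rewrite of U as sInf over probabilities
  have hUrw : ∀ t z, U t z = sInf {x | 1 - 1/z ≤ (P {ω | X ω t ≤ x}).toReal} := by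
    intro t z
    rw [hU t z]
    simp only [hF]
  -- M in multiplied form
  have hMbound : ∀ t ∈ Icc (0:ℝ) 1, ∀ z ∈ Icc (2:ℝ) B,
      A n t * (gfun z (γ t) - e*lam n) ≤ U t (z*h) - U t h ∧
      U t (z*h) - U t h ≤ A n t * (gfun z (γ t) + e*lam n) := by
    intro t ht z hz
    have hAt := hApos n t ht
    obtain ⟨hM1, hM2⟩ := abs_le.1 (hMn t ht z hz)
    have hdiv : U t (z*h) - U t h = A n t * ((U t (z*h) - U t h)/(A n t)) := by
      field_simp [hAt.ne']
    constructor
    · calc A n t * (gfun z (γ t) - e*lam n)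
          ≤ A n t * ((U t (z*h) - U t h)/(A n t)) :=
            mul_le_mul_of_nonneg_left (by linarith only [hM1]) hAt.le
        _ = U t (z*h) - U t h := hdiv.symm
    · calc U t (z*h) - U t h = A n t * ((U t (z*h) - U t h)/(A n t)) := hdiv
        _ ≤ A n t * (gfun z (γ t) + e*lam n) :=
            mul_le_mul_of_nonneg_left (by linarith only [hM2]) hAt.le
  -- the one-sided comparison
  have oneside : ∀ v ∈ Icc (0:ℝ) 1, ∀ w ∈ Icc (0:ℝ) 1, |v - w| ≤ δ n →
      ∀ Yi : ℝ, Y ≤ Yi → Yi ≤ B →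
      U w h + A n w * gfun Yi (γ w) ≤
        U v h + A n v * gfun Yi (γ v) + (3+KL)*(e*lam n)*(A n v + A n w) := by
    intro v hv w hw hvw Yi hYiY hYiB
    have hAv := hApos n v hv
    have hAw := hApos n w hw
    have hYi2 : (2:ℝ) ≤ Yi := le_trans (by linarith only [hY4]) hYiY
    have hYi1 : (1:ℝ) ≤ Yi := by linarith only [hYi2]
    have hYi0 : (0:ℝ) < Yi := by linarith only [hYi2]
    set q := 1/Yi + 2*(e*lam n) with hqdef
    have hq0 : 0 < q := by
      rw [hqdef]
      have h00 := div_pos one_pos hYi0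
      linarith only [h00, hel0]
    set y' := q⁻¹ with hy'def
    clear_value q y'
    have hy'0 : 0 < y' := by rw [hy'def]; exact inv_pos.2 hq0
    have h1y' : 1/y' = q := by rw [hy'def, one_div, inv_inv]
    have hy'le : y' ≤ Yi := by
      have h1 : 1/Yi ≤ q := by rw [hqdef]; linarith only [hel0]
      have h2 := inv_anti₀ (div_pos one_pos hYi0) h1
      rw [one_div, inv_inv] at h2
      rw [hy'def]
      exact h2
    have hy'Y₁ : Y₁ ≤ y' := by
      have hq2 : q ≤ 1/Y₁ := by
        have h1 : 1/Yi ≤ 1/Y := one_div_le_one_div_of_le hY0 hYiY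
        have h2 : (1:ℝ)/Y₁ = 2/Y := by
          rw [hYdef]
          field_simp
        rw [hqdef, h2]
        have h3 : (2:ℝ)/Y = 1/Y + 1/Y := by ring
        linarith only [h1, h2eC, h3]
      have h3 := inv_anti₀ hq0 hq2
      rw [one_div, inv_inv] at h3
      rw [hy'def]
      exact h3
    have hy'2 : (2:ℝ) ≤ y' := le_trans hY₁2 hy'Y₁
    have hy'1 : (1:ℝ) ≤ y' := by linarith only [hy'2]
    have hy'B : y' ≤ B := le_trans hy'le hYiB
    have hDpos : 0 < 1 + 2*(e*lam n)*Yi := by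
      have := mul_pos hel0 hYi0
      linarith only [this]
    have hqalt : q = (1 + 2*(e*lam n)*Yi)/Yi := by
      rw [hqdef]
      field_simp
    have hy'alt : y' = Yi/(1 + 2*(e*lam n)*Yi) := by
      rw [hy'def, hqalt, inv_div]
    have hslack : Yi - y' ≤ 2*(e*lam n)*(B*B) := by
      have h5 : Yi - y' = 2*(e*lam n)*(Yi*y') := by
        rw [hy'alt]
        field_simp
        ring
      rw [h5]
      have h6 : Yi*y' ≤ B*B :=
        mul_le_mul hYiB (le_trans hy'le hYiB) hy'0.le hB0.le
      exact mul_le_mul_of_nonneg_left h6 (by linarith only [hel0])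
    -- threshold
    have hmarg := hmargin w hw y' hy'Y₁
    have hMw := hMbound w hw y' ⟨hy'2, hy'B⟩
    have hthr : U w h + τ*(A n w) + 2*(e*lam n*(A n w)) ≤ U w (y'*h) := by
      have h1 := hMw.1
      have h2 : A n w * (τ + 2*(e*lam n)) ≤ A n w * (gfun y' (γ w) - e*lam n) := by
        apply mul_le_mul_of_nonneg_left _ hAw.le
        linarith only [hmarg, hc3]
      linarith only [h1, h2]
    -- condition S instance
    have hSnvw := hSn v hv w hw hvw
    have hRHSeq : e * (lam n * (k n : ℝ) / (n:ℝ)) = e*lam n/h := by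
      rw [hhdef]
      field_simp
    rw [hRHSeq] at hSnvw
    -- chain
    have hthr' : U w h + τ*(A n w) + 2*(e*lam n*(A n w)) ≤
        sInf {x | 1 - 1/(y'*h) ≤ (P {ω | X ω w ≤ x}).toReal} := by
      rw [← hUrw w (y'*h)]
      exact hthr
    have hYtineq : 1/Yi + e*lam n < 1/y' := by
      rw [h1y', hqdef]
      linarith only [hel0]
    have hchain := chain_step P (fun ω => X ω v) (fun ω => X ω w)
      (hXmeas v) (hXmeas w) (A n w) (lam n) e e h τ Yi y' (U w h)
      hAw hlamn he he hh1 hy'1 hYi1 hYtineq hSnvw hthr'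
    rw [← hUrw w (y'*h), ← hUrw v (Yi*h)] at hchain
    -- assemble
    have hMv := hMbound v hv Yi ⟨hYi2, hYiB⟩
    have hlip : gfun Yi (γ w) - gfun y' (γ w) ≤ B^Γ*(B^Γ*(Yi - y')) :=
      gfun_lip hy'1 hy'le hYiB (hΓ w hw)
    have hlip2 : B^Γ*(B^Γ*(Yi - y')) ≤ KL*(e*lam n) := by
      rw [hKLdef]
      have h7 : B^Γ*(Yi - y') ≤ B^Γ*(2*(e*lam n)*(B*B)) :=
        mul_le_mul_of_nonneg_left hslack hBΓ0.le
      have h8 : B^Γ*(B^Γ*(Yi - y')) ≤ B^Γ*(B^Γ*(2*(e*lam n)*(B*B))) :=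
        mul_le_mul_of_nonneg_left h7 hBΓ0.le
      calc B^Γ*(B^Γ*(Yi - y')) ≤ B^Γ*(B^Γ*(2*(e*lam n)*(B*B))) := h8
        _ = B ^ Γ * (B ^ Γ * (2 * (B * B)))*(e*lam n) := by ring
    have H1 : A n w * gfun Yi (γ w) ≤ A n w * gfun y' (γ w) + A n w*(KL*(e*lam n)) := by
      have h9 := mul_le_mul_of_nonneg_left (le_trans hlip hlip2) hAw.le
      linarith only [h9]
    have H2 : A n w * gfun y' (γ w) ≤ (U w (y'*h) - U w h) + A n w*(e*lam n) := by
      have h9 := hMw.1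
      linarith only [h9]
    have H3 : U w (y'*h) ≤ U v (Yi*h) + 2*(e*lam n*(A n w)) := by
      linarith only [hchain]
    have H4 : U v (Yi*h) - U v h ≤ A n v * gfun Yi (γ v) + A n v*(e*lam n) := by
      have h9 := hMv.2
      linarith only [h9]
    have Hpos1 : 0 ≤ (e*lam n)*(A n v) := mul_nonneg hel0.le hAv.le
    have Hpos2 : 0 ≤ KL*((e*lam n)*(A n v)) := mul_nonneg hKL0.le Hpos1
    linarith only [H1, H2, H3, H4, Hpos1, Hpos2]
  -- two-sided bounds
  have habs : ∀ Yi : ℝ, Y ≤ Yi → Yi ≤ B →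
      |(U s h - U u h) + A n s * gfun Yi (γ s) - A n u * gfun Yi (γ u)|
        ≤ (3+KL)*(e*lam n)*(A n s + A n u) := by
    intro Yi h1 h2
    rw [abs_le]
    constructor
    · have h3 := oneside s hs u hu hsu Yi h1 h2
      linarith only [h3]
    · have h3 := oneside u hu s hs (by rwa [abs_sub_comm]) Yi h1 h2
      linarith only [h3]
  have hd1 := habs Y (le_refl Y) hBY
  have hd2 := habs (Y*Y) (le_mul_of_one_le_left hY0.le hY1)
    (by rw [hBdef]; exact le_mul_of_one_le_right (by linarith only [hYY]) hY1)
  have hd3 := habs B hBY (le_refl B)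
  -- identities
  have hid2 : ∀ t : ℝ, gfun (Y*Y) (γ t) - gfun Y (γ t) = Y^(γ t) * gfun Y (γ t) := by
    intro t
    have h1 := gfun_identity (γ t) hY0 hY0
    linarith only [h1]
  have hid3 : ∀ t : ℝ, gfun (Y*Y*Y) (γ t) - gfun (Y*Y) (γ t)
      = Y^(γ t)*(Y^(γ t) * gfun Y (γ t)) := by
    intro t
    have h1 := gfun_identity (y := Y*Y) (r := Y) (γ t) (mul_pos hY0 hY0) hY0
    have h2 : (Y*Y)^(γ t) = Y^(γ t)*Y^(γ t) := Real.mul_rpow hY0.le hY0.le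
    rw [h2] at h1
    linear_combination h1
  have habs_sub : ∀ a b : ℝ, |a - b| ≤ |a| + |b| := fun a b => by
    calc |a - b| = |a + (-b)| := by ring_nf
      _ ≤ |a| + |(-b)| := abs_add_le _ _
      _ = |a| + |b| := by rw [abs_neg]
  set E := 2*((3+KL)*(e*lam n)) with hEdef
  clear_value E
  have hII : |A n s*(Y^(γ s)*gfun Y (γ s)) - A n u*(Y^(γ u)*gfun Y (γ u))|
      ≤ E*(A n s + A n u) := by
    have heq : A n s*(Y^(γ s)*gfun Y (γ s)) - A n u*(Y^(γ u)*gfun Y (γ u))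
        = ((U s h - U u h) + A n s * gfun (Y*Y) (γ s) - A n u * gfun (Y*Y) (γ u))
          - ((U s h - U u h) + A n s * gfun Y (γ s) - A n u * gfun Y (γ u)) := by
      linear_combination (A n u) * hid2 u - (A n s) * hid2 s
    rw [heq]
    calc _ ≤ |(U s h - U u h) + A n s * gfun (Y*Y) (γ s) - A n u * gfun (Y*Y) (γ u)|
          + |(U s h - U u h) + A n s * gfun Y (γ s) - A n u * gfun Y (γ u)| :=
        habs_sub _ _
      _ ≤ E*(A n s + A n u) := by
        rw [hEdef]
        have h4 := add_le_add hd2 hd1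
        linarith only [h4]
  have hIII : |A n s*(Y^(γ s)*(Y^(γ s)*gfun Y (γ s)))
      - A n u*(Y^(γ u)*(Y^(γ u)*gfun Y (γ u)))| ≤ E*(A n s + A n u) := by
    have heq : A n s*(Y^(γ s)*(Y^(γ s)*gfun Y (γ s))) - A n u*(Y^(γ u)*(Y^(γ u)*gfun Y (γ u)))
        = ((U s h - U u h) + A n s * gfun (Y*Y*Y) (γ s) - A n u * gfun (Y*Y*Y) (γ u))
          - ((U s h - U u h) + A n s * gfun (Y*Y) (γ s) - A n u * gfun (Y*Y) (γ u)) := by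
      linear_combination (A n u) * hid3 u - (A n s) * hid3 s
    rw [heq]
    calc _ ≤ |(U s h - U u h) + A n s * gfun (Y*Y*Y) (γ s) - A n u * gfun (Y*Y*Y) (γ u)|
          + |(U s h - U u h) + A n s * gfun (Y*Y) (γ s) - A n u * gfun (Y*Y) (γ u)| :=
        habs_sub _ _
      _ ≤ E*(A n s + A n u) := by
        rw [hEdef]
        have hd3' : |(U s h - U u h) + A n s * gfun B (γ s) - A n u * gfun B (γ u)|
            ≤ (3+KL)*(e*lam n)*(A n s + A n u) := hd3
        rw [hBdef] at hd3'
        have h4 := add_le_add hd3' hd2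
        linarith only [h4]
  -- inversion
  have hγsΓ := hΓ s hs
  have hγuΓ := hΓ u hu
  have hws0 : 0 < Y^(γ s) := Real.rpow_pos_of_pos hY0 _
  have hwu0 : 0 < Y^(γ u) := Real.rpow_pos_of_pos hY0 _
  have hwuW : Y^(γ u) ≤ W := by
    rw [hWdef]
    exact Real.rpow_le_rpow_of_exponent_le hY1 (le_trans (le_abs_self _) hγuΓ)
  have hGs0 : 0 ≤ gfun Y (γ s) := gfun_nonneg hY1
  have hGu0 : 0 ≤ gfun Y (γ u) := gfun_nonneg hY1
  have hlb : ∀ t : ℝ, |γ t| ≤ Γ → d0 ≤ Y^(γ t) * gfun Y (γ t) := by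
    intro t ht
    have hw1 : Y^(-Γ) ≤ Y^(γ t) := Real.rpow_le_rpow_of_exponent_le hY1 (abs_le.1 ht).1
    have hG1 : L*Y^(-Γ) ≤ gfun Y (γ t) := by rw [hLdef]; exact gfun_ge hY1 ht
    rw [hd0def]
    exact mul_le_mul hw1 hG1 (mul_nonneg hL0.le hYmΓ0.le) (Real.rpow_pos_of_pos hY0 _).le
  have hub : Y^(γ u) * gfun Y (γ u) ≤ D0 := by
    have hG2 : gfun Y (γ u) ≤ L*W := by
      rw [hWdef, hLdef]; exact gfun_le hY1 hγuΓ
    rw [hD0def]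
    exact mul_le_mul hwuW hG2 hGu0 hW0.le
  have hE0 : 0 ≤ E := by
    rw [hEdef]
    have h4 := mul_nonneg (by linarith only [hKL0] : (0:ℝ) ≤ 3+KL) hel0.le
    linarith only [h4]
  have hE1 : E * (R+1) ≤ d0/2 := by
    have h1 : e * ((3+KL)*C*(R+1)) ≤ d0/4 := by
      have h2 := mul_le_mul_of_nonneg_right hcap2 hKLCR.le
      have h3 : d0/(4*((3+KL)*C*(R+1))) * ((3+KL)*C*(R+1)) = d0/4 := by
        field_simp
      rw [h3] at h2
      exact h2
    rw [hEdef]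
    have hp : 0 ≤ ((3+KL)*e*(R+1))*(C - lam n) :=
      mul_nonneg (mul_nonneg (mul_nonneg (by linarith only [hKL0]) he.le)
        (by linarith only [hRpos])) (by linarith only [hlamC])
    linarith only [h1, hp]
  have hE2 : E ≤ d0/8 := by
    have h1 : e * ((3+KL)*C) ≤ d0/16 := by
      have h2 := mul_le_mul_of_nonneg_right hcap3 hKLC.le
      have h3 : d0/(16*((3+KL)*C)) * ((3+KL)*C) = d0/16 := by
        field_simp
      rw [h3] at h2
      exact h2
    rw [hEdef]
    have hp : 0 ≤ ((3+KL)*e)*(C - lam n) :=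
      mul_nonneg (mul_nonneg (by linarith only [hKL0]) he.le) (by linarith only [hlamC])
    linarith only [h1, hp]
  have hinv := inv_step (hApos n s hs) (hApos n u hu) hd0 hW1 hwu0 hwuW
    (hlb s hγsΓ) (hlb u hγuΓ) hub hRdef hE0 hE1 hE2 hII hIII
  -- from |ws - wu| to |γ s - γ u|
  have hwse : Y^(γ s) = Real.exp (L*(γ s)) := by rw [hLdef]; exact rpow_eq_exp hY0
  have hwue : Y^(γ u) = Real.exp (L*(γ u)) := by rw [hLdef]; exact rpow_eq_exp hY0
  have haM : |L*(γ s)| ≤ L*Γ := by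
    rw [abs_mul, abs_of_pos hL0]
    exact mul_le_mul_of_nonneg_left hγsΓ hL0.le
  have hbM : |L*(γ u)| ≤ L*Γ := by
    rw [abs_mul, abs_of_pos hL0]
    exact mul_le_mul_of_nonneg_left hγuΓ hL0.le
  have hexp := abs_sub_le_exp_abs haM hbM
  rw [← hwse, ← hwue] at hexp
  have hfac : |L*(γ s) - L*(γ u)| = L*|γ s - γ u| := by
    rw [show L*(γ s) - L*(γ u) = L*(γ s - γ u) by ring, abs_mul, abs_of_pos hL0]
  rw [hfac] at hexp
  -- final chain
  have hKe : Kfin * e ≤ ε := by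
    have h9 := mul_le_mul_of_nonneg_right hcap4 hKfin0.le
    rw [div_mul_cancel₀ _ hKfin0.ne'] at h9
    linarith only [h9]
  have hstep : L*|γ s - γ u| ≤ Real.exp (L*Γ) * (Kpart * E) := by
    calc L*|γ s - γ u| ≤ Real.exp (L*Γ) * |Y^(γ s) - Y^(γ u)| := hexp
      _ ≤ Real.exp (L*Γ) * (Kpart * E) := by
        apply mul_le_mul_of_nonneg_left _ (Real.exp_pos _).le
        rw [hKpartdef]
        exact hinv
  have hfin2 : Real.exp (L*Γ) * (Kpart * E) = L*(Kfin*(e*lam n)) := by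
    rw [hKfindef, hEdef]
    field_simp
  rw [hfin2] at hstep
  have hstep2 : L*|γ s - γ u| ≤ L*(ε * lam n) := by
    have h9 : Kfin*(e*lam n) ≤ ε*lam n := by
      have h8 := mul_le_mul_of_nonneg_right hKe hlamn.le
      linarith only [h8]
    have h10 := mul_le_mul_of_nonneg_left h9 hL0.le
    linarith only [hstep, h10]
  exact le_of_mul_le_mul_left hstep2 hL0
end
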